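/- Let $R$ be an affine $k$-algebra of GK dimension $1$ with a finite generating set $T$ satisfying $\dim_k kT^i - \dim_k kT^{i-1} \le c$ for all $i$, and let $\rho: R \to M_n(k)$ be a $k$-algebra homomorphism such that $\bar{k}\rho(R) = M_n(\bar{k})$ (an irreducible representation). Then $n \le \tfrac{1}{2}\bigl(c^2 + \sqrt{c^4 + 4c^2 - 4c + 4}\bigr)$. -/

import Mathlib

/-- The span of all words (products) of at most `i` elements of `S`,
including the empty product `1`. -/
def wordSpan (k : Type*) {A : Type*} [Field k] [Ring A] [Algebra k A]
    (S : Set A) (i : ℕ) : Submodule k A :=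
  Submodule.span k {x | ∃ l : List A, l.length ≤ i ∧ (∀ a ∈ l, a ∈ S) ∧ l.prod = x}

namespace SSW

open Module Submodule

variable {k R : Type*} [Field k] [Ring R] [Algebra k R]

theorem mem_wordSpan {S : Set R} {l : List R} (hl : ∀ a ∈ l, a ∈ S) {i : ℕ}
    (hlen : l.length ≤ i) : l.prod ∈ wordSpan k S i :=
  Submodule.subset_span ⟨l, hlen, hl, rfl⟩

theorem one_mem_wordSpan {S : Set R} {i : ℕ} : (1 : R) ∈ wordSpan k S i :=
  Submodule.subset_span ⟨[], by simp, by simp, rfl⟩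

theorem wordSpan_mono {S : Set R} {i j : ℕ} (h : i ≤ j) :
    wordSpan k S i ≤ wordSpan k S j :=
  Submodule.span_mono (fun _x ⟨l, h1, h2, h3⟩ => ⟨l, h1.trans h, h2, h3⟩)

theorem mul_mem_wordSpan {S : Set R} {i j : ℕ} {x y : R}
    (hx : x ∈ wordSpan k S i) (hy : y ∈ wordSpan k S j) :
    x * y ∈ wordSpan k S (i + j) := by
  induction hx using Submodule.span_induction generalizing y with
  | mem x hx =>
    obtain ⟨l, hl1, hl2, rfl⟩ := hx
    induction hy using Submodule.span_induction with
    | mem y hy =>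
      obtain ⟨m, hm1, hm2, rfl⟩ := hy
      rw [← List.prod_append]
      refine mem_wordSpan ?_ (by simpa using Nat.add_le_add hl1 hm1)
      intro a ha
      rcases List.mem_append.1 ha with h | h
      exacts [hl2 a h, hm2 a h]
    | zero => simpa using Submodule.zero_mem _
    | add y z _ _ hy hz => rw [mul_add]; exact Submodule.add_mem _ hy hz
    | smul a y _ hy => rw [mul_smul_comm]; exact Submodule.smul_mem _ _ hy
  | zero => simpa using Submodule.zero_mem _
  | add x z _ _ hx hz => rw [add_mul]; exact Submodule.add_mem _ (hx hy) (hz hy)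
  | smul a x _ hx => rw [smul_mul_assoc]; exact Submodule.smul_mem _ _ (hx hy)

theorem listSet_finite (T : Finset R) (i : ℕ) :
    {l : List R | l.length ≤ i ∧ ∀ a ∈ l, a ∈ (T : Set R)}.Finite := by
  have h1 : {l : List (↥(T : Set R)) | l.length ≤ i}.Finite := List.finite_length_le _ i
  have h2 := h1.image (List.map (Subtype.val : ↥(T : Set R) → R))
  refine h2.subset ?_
  rintro l ⟨hlen, hmem⟩
  refine ⟨l.pmap (fun a ha => (⟨a, ha⟩ : ↥(T : Set R))) hmem, ?_, ?_⟩
  · simpa using hlen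
  · simp [List.map_pmap]

theorem wordSpan_fd (T : Finset R) (i : ℕ) :
    FiniteDimensional k (wordSpan k (T : Set R) i) := by
  apply FiniteDimensional.span_of_finite
  have := (listSet_finite T i).image List.prod
  refine this.subset ?_
  rintro x ⟨l, h1, h2, rfl⟩
  exact ⟨l, ⟨h1, h2⟩, rfl⟩

theorem wordSpan_zero_le (S : Set R) :
    wordSpan k S 0 ≤ Submodule.span k {(1 : R)} := by
  apply Submodule.span_mono
  rintro x ⟨l, h1, _h2, rfl⟩
  rw [Nat.le_zero, List.length_eq_zero_iff] at h1
  subst h1; simp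

theorem wordSpan_finrank (T : Finset R) (c : ℕ)
    (hgrowth : ∀ i : ℕ, Module.finrank k (wordSpan k (T : Set R) (i + 1)) ≤
      Module.finrank k (wordSpan k (T : Set R) i) + c) (i : ℕ) :
    Module.finrank k (wordSpan k (T : Set R) i) ≤ 1 + c * i := by
  induction i with
  | zero =>
    have h0 : Module.finrank k (Submodule.span k {(1 : R)}) ≤ 1 := by
      classical
      simpa using finrank_span_le_card ({(1 : R)} : Set R)
    haveI : FiniteDimensional k (Submodule.span k {(1 : R)}) :=
      FiniteDimensional.span_of_finite k (Set.finite_singleton _)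
    have := Submodule.finrank_mono (wordSpan_zero_le (k := k) (S := (T : Set R)))
    simpa using this.trans h0
  | succ i ih =>
    calc Module.finrank k (wordSpan k (T : Set R) (i + 1))
        ≤ Module.finrank k (wordSpan k (T : Set R) i) + c := hgrowth i
      _ ≤ 1 + c * i + c := by omega
      _ = 1 + c * (i + 1) := by ring

end SSW

namespace SSW

open Module Submodule

variable {k R : Type*} [Field k] [Ring R] [Algebra k R]

theorem lex_append_same_length {r : R → R → Prop} {u v : List R}
    (h : List.Lex r u v) (hlen : u.length = v.length) (y z : List R) :
    List.Lex r (u ++ y) (v ++ z) := by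
  induction h with
  | nil => simp at hlen
  | rel hab => exact List.Lex.rel hab
  | cons h ih => exact List.Lex.cons (ih (by simpa using hlen))

theorem take_drop_take (x : List R) {o d L : ℕ} (h : o + d ≤ L) :
    ((x.take L).drop o).take d = (x.drop o).take d := by
  rw [List.drop_take, List.take_take]
  congr 1
  omega

set_option maxHeartbeats 1000000 in
theorem key (T : Finset R) {c n : ℕ} (ρ : R →ₐ[k] Matrix (Fin n) (Fin n) k)
    (hgrowth : ∀ i : ℕ, Module.finrank k (wordSpan k (T : Set R) (i + 1)) ≤
      Module.finrank k (wordSpan k (T : Set R) i) + c)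
    (hc : 1 ≤ c) (hn : 1 ≤ n)
    (l : List R) (hlT : ∀ a ∈ l, a ∈ (T : Set R)) (hlen : l.length = c * n + c) :
    ρ l.prod ∈ (wordSpan k (T : Set R) (c * n + c - 1)).map ρ.toLinearMap := by
  classical
  by_contra hbad
  set N := c * n + c with hN
  set L := c * n with hL
  have hL1 : 1 ≤ L := Nat.one_le_iff_ne_zero.2 (by positivity)
  have hNL : N = L + c := rfl
  letI : LinearOrder R := IsWellOrder.linearOrder WellOrderingRel
  set V : ℕ → Submodule k R := fun i => wordSpan k (T : Set R) i with hV
  set UU : Submodule k (Matrix (Fin n) (Fin n) k) := (V (N - 1)).map ρ.toLinearMap with hUU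
  set Bad : Set (List R) := {l : List R | l.length = N ∧ (∀ a ∈ l, a ∈ (T : Set R)) ∧
      ρ l.prod ∉ UU} with hBadDef
  have hBadne : Bad.Nonempty := ⟨l, hlen, hlT, hbad⟩
  have hBadfin : Bad.Finite := (listSet_finite T N).subset (fun l hl => ⟨hl.1.le, hl.2.1⟩)
  obtain ⟨w, hwBad, hwmin⟩ := Set.exists_min_image Bad id hBadfin hBadne
  obtain ⟨hwlen, hwT, hwbad⟩ := hwBad
  have hmin : ∀ v : List R, v.length = N → (∀ a ∈ v, a ∈ (T : Set R)) →
      List.Lex (· < ·) v w → ρ v.prod ∈ UU := by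
    intro v h1 h2 hlt
    by_contra hv
    have hwv : id w ≤ id v := hwmin v ⟨h1, h2, hv⟩
    exact absurd (lt_of_lt_of_le (show v < w from hlt) hwv) (lt_irrefl v)
  -- windows
  set Wd : ℕ → List R := fun s => (w.drop s).take L with hWd
  have hWdlen : ∀ s, s ≤ c → (Wd s).length = L := by
    intro s hs
    simp only [hWd, List.length_take, List.length_drop, hwlen]
    omega
  have hWdT : ∀ s, ∀ a ∈ Wd s, a ∈ (T : Set R) := fun s a ha =>
    hwT a (((List.take_sublist _ _).trans (List.drop_sublist _ _)).subset ha)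
  have hdecomp : ∀ s : ℕ, w.take s ++ Wd s ++ w.drop (s + L) = w := by
    intro s
    rw [List.append_assoc]
    simp only [hWd]
    rw [List.drop_take_append_drop, List.take_append_drop]
  -- membership helpers
  have hxmem : ∀ s : ℕ, s ≤ N → (w.take s).prod ∈ V s := by
    intro s hs
    refine mem_wordSpan (fun a ha => hwT a ((List.take_sublist _ _).subset ha)) ?_
    simp [List.length_take]
  have hymem : ∀ s : ℕ, (w.drop s).prod ∈ V (N - s) := by
    intro s
    refine mem_wordSpan (fun a ha => hwT a ((List.drop_sublist _ _).subset ha)) ?_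
    simp [List.length_drop, hwlen]
  by_cases hrep : ∃ s s' : ℕ, s < s' ∧ s' ≤ c ∧ Wd s = Wd s'
  · -- Case 1 : a repeated window gives an n-th power, killed by Cayley–Hamilton
    obtain ⟨s, s', hss', hs'c, heq⟩ := hrep
    set d := s' - s with hd
    have hsd : s' = s + d := by omega
    have hd1 : 1 ≤ d := by omega
    have hdc : d ≤ c := by omega
    have hnd : n * d ≤ L := by
      calc n * d ≤ n * c := Nat.mul_le_mul_left n hdc
        _ = c * n := Nat.mul_comm n c
    set u := (w.drop s).take d with hu
    have hulen : u.length = d := by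
      simp only [hu, List.length_take, List.length_drop, hwlen]
      omega
    have heq' : (w.drop s).take L = (w.drop s').take L := heq
    have hshift : ∀ o, o + d ≤ L → (w.drop (s + o)).take d = (w.drop (s' + o)).take d := by
      intro o ho
      have h1 := take_drop_take (w.drop s) ho
      have h2 := take_drop_take (w.drop s') ho
      rw [← List.drop_drop (i := o) (j := s) (l := w), ← List.drop_drop (i := o) (j := s') (l := w), ← h1, ← h2, heq']
    have hblock : ∀ j, (j + 1) * d ≤ L → (w.drop (s + j * d)).take d = u := by
      intro j
      induction j with
      | zero => intro _; simp [hu]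
      | succ j ih =>
        intro hj
        have hm : (j + 1) * d = j * d + d := by ring
        have hm2 : (j + 1 + 1) * d = (j + 1) * d + d := by ring
        have hj' : (j + 1) * d ≤ L := by omega
        have hsh := hshift (j * d) (by omega)
        have e : s' + j * d = s + (j + 1) * d := by omega
        rw [← ih hj', ← e]
        exact hsh.symm
    have hassemble : ∀ q j, (j + q) * d ≤ L →
        (w.drop (s + j * d)).take (q * d) = (List.replicate q u).flatten := by
      intro q
      induction q with
      | zero => intro j _; simp
      | succ q ih =>
        intro j hj
        have hm : (q + 1) * d = d + q * d := by ring
        rw [hm, List.take_add]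
        have hb1 : (j + 1) * d ≤ (j + 1 + q) * d := Nat.mul_le_mul_right d (by omega)
        have hb2 : (j + 1 + q) * d = (j + (q + 1)) * d := by ring
        have h1 : (w.drop (s + j * d)).take d = u := hblock j (by omega)
        have h2 : (w.drop (s + j * d)).drop d = w.drop (s + (j + 1) * d) := by
          rw [List.drop_drop]
          congr 1
          have : (j + 1) * d = j * d + d := by ring
          omega
        rw [h1, h2, ih (j + 1) (by omega)]
        simp [List.replicate_succ]
    have hpump : (w.drop s).take (n * d) = (List.replicate n u).flatten := by
      have := hassemble n 0 (by simpa using hnd)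
      simpa using this
    set x := w.take s with hxw2
    set y := w.drop (s + n * d) with hyw2
    have hxFy : x ++ (List.replicate n u).flatten ++ y = w := by
      rw [← hpump, List.append_assoc, List.drop_take_append_drop, List.take_append_drop]
    have hflatprod : ∀ q : ℕ, ((List.replicate q u).flatten).prod = u.prod ^ q := by
      intro q
      induction q with
      | zero => simp
      | succ q ih => rw [List.replicate_succ, List.flatten_cons, List.prod_append, ih, pow_succ']
    have hwprod : w.prod = x.prod * u.prod ^ n * y.prod := by
      calc w.prod = (x ++ (List.replicate n u).flatten ++ y).prod := by rw [hxFy]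
        _ = x.prod * u.prod ^ n * y.prod := by
            rw [List.prod_append, List.prod_append, hflatprod n]
    -- Cayley-Hamilton
    set A := ρ u.prod with hA
    have hmonic := Matrix.charpoly_monic A
    have hdeg : A.charpoly.natDegree = n := by
      rw [Matrix.charpoly_natDegree_eq_dim, Fintype.card_fin]
    have hco : A.charpoly.coeff n = 1 := by simpa [hdeg] using hmonic.coeff_natDegree
    have h0 : (∑ i ∈ Finset.range n, A.charpoly.coeff i • A ^ i) + A ^ n = 0 := by
      have h := Matrix.aeval_self_charpoly A
      rw [Polynomial.aeval_eq_sum_range, hdeg, Finset.sum_range_succ] at h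
      rwa [hco, one_smul] at h
    have hAn : A ^ n = -∑ i ∈ Finset.range n, A.charpoly.coeff i • A ^ i :=
      eq_neg_of_add_eq_zero_right h0
    have hterm : ∀ i, i < n → x.prod * u.prod ^ i * y.prod ∈ V (N - 1) := by
      intro i hi
      have hx : x.prod ∈ V s := hxmem s (by omega)
      have hui : u.prod ^ i ∈ V (i * d) := by
        rw [← hflatprod i]
        refine mem_wordSpan ?_ ?_
        · intro a ha
          obtain ⟨l', hl', hal'⟩ := List.mem_flatten.1 ha
          rw [List.eq_of_mem_replicate hl'] at hal'
          exact hwT a (((List.take_sublist _ _).trans (List.drop_sublist _ _)).subset hal')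
        · simp [List.length_flatten, List.map_replicate, List.sum_replicate, hulen, smul_eq_mul]
      have hy : y.prod ∈ V (N - (s + n * d)) := hymem (s + n * d)
      have hmul := mul_mem_wordSpan (mul_mem_wordSpan hx hui) hy
      refine wordSpan_mono ?_ hmul
      have h1 : i * d + d ≤ n * d := by
        have h2 : (i + 1) * d = i * d + d := by ring
        have h3 : (i + 1) * d ≤ n * d := Nat.mul_le_mul_right d hi
        omega
      omega
    apply hwbad
    have hrw : ρ w.prod = -∑ i ∈ Finset.range n,
        A.charpoly.coeff i • (ρ x.prod * A ^ i * ρ y.prod) := by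
      rw [hwprod, map_mul, map_mul, map_pow, hAn]
      rw [mul_neg, neg_mul, Finset.mul_sum, Finset.sum_mul]
      congr 1
      apply Finset.sum_congr rfl
      intro i _
      rw [mul_smul_comm, smul_mul_assoc]
    rw [hrw]
    apply Submodule.neg_mem
    apply Submodule.sum_mem
    intro i hi
    apply Submodule.smul_mem
    have heqi : ρ x.prod * A ^ i * ρ y.prod = ρ (x.prod * u.prod ^ i * y.prod) := by
      rw [map_mul, map_mul, map_pow]
    rw [heqi]
    exact Submodule.mem_map_of_mem (hterm i (Finset.mem_range.1 hi))
  · -- Case 2 : all windows distinct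
    push_neg at hrep
    have hdist : ∀ s s' : ℕ, s ≤ c → s' ≤ c → s ≠ s' → Wd s ≠ Wd s' := by
      intro s s' hsc hs'c hne
      rcases Nat.lt_or_ge s s' with h | h
      · exact hrep s s' h hs'c
      · have h' : s' < s := by omega
        exact fun hEq => (hrep s' s h' hsc) hEq.symm
    set π := (V (L - 1)).mkQ with hπ
    have hfammem : ∀ s : Fin (c + 1), (Wd (s : ℕ)).prod ∈ V L := fun s =>
      mem_wordSpan (hWdT (s : ℕ)) (le_of_eq (hWdlen (s : ℕ) (Fin.is_le s)))
    have hnotindep : ¬ LinearIndependent k (fun s : Fin (c + 1) => π ((Wd (s : ℕ)).prod)) := by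
      intro hindep
      haveI := wordSpan_fd (k := k) T L
      haveI := wordSpan_fd (k := k) T (L - 1)
      set f : V L →ₗ[k] R ⧸ V (L - 1) := π ∘ₗ (V L).subtype with hf
      have hkerrk : finrank k (LinearMap.ker f) = finrank k (V (L - 1)) := by
        have hker : LinearMap.ker f = Submodule.comap (V L).subtype (V (L - 1)) := by
          rw [hf, LinearMap.ker_comp, Submodule.ker_mkQ]
        rw [hker]
        exact (Submodule.comapSubtypeEquivOfLe (wordSpan_mono (by omega))).finrank_eq
      have hrangerk : finrank k (LinearMap.range f) = finrank k (Submodule.map π (V L)) := by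
        have hrange : LinearMap.range f = Submodule.map π (V L) := by
          rw [hf, LinearMap.range_comp, Submodule.range_subtype]
        rw [hrange]
      have hrk := LinearMap.finrank_range_add_finrank_ker f
      have hg := hgrowth (L - 1)
      rw [show L - 1 + 1 = L from by omega] at hg
      have eV1 : finrank k (V L) = finrank k (wordSpan k (T : Set R) L) := rfl
      have eV2 : finrank k (V (L - 1)) = finrank k (wordSpan k (T : Set R) (L - 1)) := rfl
      have hQ : finrank k (Submodule.map π (V L)) ≤ c := by omega
      haveI : Module.Finite k (Submodule.map π (V L)) := Module.Finite.map _ _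
      have hle : Submodule.span k (Set.range (fun s : Fin (c + 1) => π ((Wd (s : ℕ)).prod)))
          ≤ Submodule.map π (V L) := by
        rw [Submodule.span_le]
        rintro _ ⟨s, rfl⟩
        exact Submodule.mem_map_of_mem (hfammem s)
      have hcard := Submodule.finrank_mono hle
      rw [finrank_span_eq_card hindep, Fintype.card_fin] at hcard
      omega
    obtain ⟨g, hgsum, s₁, hgs₁⟩ := Fintype.not_linearIndependent_iff.1 hnotindep
    have hz : (∑ s : Fin (c + 1), g s • (Wd (s : ℕ)).prod) ∈ V (L - 1) := by
      have hπ0 : π (∑ s : Fin (c + 1), g s • (Wd (s : ℕ)).prod) = 0 := by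
        rw [map_sum]
        simpa [map_smul] using hgsum
      rwa [← LinearMap.mem_ker, Submodule.ker_mkQ] at hπ0
    obtain ⟨s₀, hs₀mem, hs₀max⟩ := Set.exists_max_image {s : Fin (c + 1) | g s ≠ 0}
      (fun s => Wd (s : ℕ)) (Set.toFinite _) ⟨s₁, hgs₁⟩
    have hgs₀ : g s₀ ≠ 0 := hs₀mem
    set x := w.take (s₀ : ℕ) with hxw2
    set y := w.drop ((s₀ : ℕ) + L) with hyw2
    have hw_eq : x ++ Wd (s₀ : ℕ) ++ y = w := hdecomp (s₀ : ℕ)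
    have hs₀c : (s₀ : ℕ) ≤ c := Fin.is_le s₀
    have hws_len : ∀ s : Fin (c + 1), (x ++ Wd (s : ℕ) ++ y).length = N := by
      intro s
      have e1 : x.length = (s₀ : ℕ) := by
        simp only [hxw2, List.length_take, hwlen]
        omega
      have e2 : y.length = N - ((s₀ : ℕ) + L) := by
        simp only [hyw2, List.length_drop, hwlen]
      have e3 := hWdlen (s : ℕ) (Fin.is_le s)
      simp only [List.length_append, e1, e2, e3]
      omega
    have hws_T : ∀ s : Fin (c + 1), ∀ a ∈ x ++ Wd (s : ℕ) ++ y, a ∈ (T : Set R) := by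
      intro s a ha
      rcases List.mem_append.1 ha with h | h
      · rcases List.mem_append.1 h with h' | h'
        · exact hwT a ((List.take_sublist _ _).subset h')
        · exact hWdT _ a h'
      · exact hwT a ((List.drop_sublist _ _).subset h)
    have himgs : ∀ s : Fin (c + 1), s ≠ s₀ → g s • ρ ((x ++ Wd (s : ℕ) ++ y).prod) ∈ UU := by
      intro s hne
      by_cases hgs : g s = 0
      · rw [hgs, zero_smul]; exact Submodule.zero_mem _
      · refine Submodule.smul_mem _ _ (hmin _ (hws_len s) (hws_T s) ?_)
        have hneW : Wd (s : ℕ) ≠ Wd (s₀ : ℕ) :=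
          hdist _ _ (Fin.is_le s) hs₀c (fun hval => hne (Fin.val_injective hval))
        have hlt : Wd (s : ℕ) < Wd (s₀ : ℕ) := lt_of_le_of_ne (hs₀max s hgs) hneW
        have hlex0 : List.Lex (· < ·) (Wd (s : ℕ)) (Wd (s₀ : ℕ)) := hlt
        have hlex1 := lex_append_same_length hlex0
          (by rw [hWdlen _ (Fin.is_le s), hWdlen _ hs₀c]) y y
        have h2 := List.Lex.append_left (· < ·) hlex1 x
        rw [← hw_eq, List.append_assoc, List.append_assoc]
        exact h2
    have hcomb : ρ (x.prod * (∑ s : Fin (c + 1), g s • (Wd (s : ℕ)).prod) * y.prod) ∈ UU := by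
      apply Submodule.mem_map_of_mem
      have hx : x.prod ∈ V (s₀ : ℕ) := hxmem _ (by omega)
      have hy : y.prod ∈ V (N - ((s₀ : ℕ) + L)) := hymem _
      have hmul := mul_mem_wordSpan (mul_mem_wordSpan hx hz) hy
      refine wordSpan_mono ?_ hmul
      omega
    have hexpand : ρ (x.prod * (∑ s : Fin (c + 1), g s • (Wd (s : ℕ)).prod) * y.prod)
        = ∑ s : Fin (c + 1), g s • ρ ((x ++ Wd (s : ℕ) ++ y).prod) := by
      rw [map_mul, map_mul, map_sum, Finset.mul_sum, Finset.sum_mul]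
      apply Finset.sum_congr rfl
      intro s _
      rw [map_smul, mul_smul_comm, smul_mul_assoc]
      congr 1
      rw [List.prod_append, List.prod_append, map_mul, map_mul]
    have hsplit := Finset.add_sum_erase Finset.univ
      (fun s : Fin (c + 1) => g s • ρ ((x ++ Wd (s : ℕ) ++ y).prod)) (Finset.mem_univ s₀)
    have herase : (∑ s ∈ Finset.univ.erase s₀, g s • ρ ((x ++ Wd (s : ℕ) ++ y).prod)) ∈ UU :=
      Submodule.sum_mem _ (fun s hs => himgs s (Finset.ne_of_mem_erase hs))
    have hs₀w : g s₀ • ρ w.prod ∈ UU := by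
      have h1 : g s₀ • ρ ((x ++ Wd (s₀ : ℕ) ++ y).prod)
          = (∑ s : Fin (c + 1), g s • ρ ((x ++ Wd (s : ℕ) ++ y).prod))
            - ∑ s ∈ Finset.univ.erase s₀, g s • ρ ((x ++ Wd (s : ℕ) ++ y).prod) := by
        rw [← hsplit]
        abel
      rw [hw_eq] at h1
      rw [h1, ← hexpand]
      exact Submodule.sub_mem _ hcomb herase
    apply hwbad
    have hfin := Submodule.smul_mem _ (g s₀)⁻¹ hs₀w
    rwa [inv_smul_smul₀ hgs₀] at hfin

end SSW

namespace SSW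

open Module Submodule

variable {k R : Type*} [Field k] [Ring R] [Algebra k R]

theorem all_words (T : Finset R) {c n : ℕ} (ρ : R →ₐ[k] Matrix (Fin n) (Fin n) k)
    (hgrowth : ∀ i : ℕ, Module.finrank k (wordSpan k (T : Set R) (i + 1)) ≤
      Module.finrank k (wordSpan k (T : Set R) i) + c)
    (hc : 1 ≤ c) (hn : 1 ≤ n) :
    ∀ (Len : ℕ) (l : List R), l.length = Len → (∀ a ∈ l, a ∈ (T : Set R)) →
      ρ l.prod ∈ (wordSpan k (T : Set R) (c * n + c - 1)).map ρ.toLinearMap := by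
  intro Len
  induction Len using Nat.strong_induction_on with
  | _ Len ih =>
    intro l hLen hlT
    by_cases hshort : l.length ≤ c * n + c - 1
    · exact Submodule.mem_map_of_mem (mem_wordSpan hlT hshort)
    · have hlong : c * n + c ≤ l.length := by omega
      have hl₁T : ∀ a ∈ l.take (c * n + c), a ∈ (T : Set R) :=
        fun a ha => hlT a ((List.take_sublist _ _).subset ha)
      have hl₂T : ∀ a ∈ l.drop (c * n + c), a ∈ (T : Set R) :=
        fun a ha => hlT a ((List.drop_sublist _ _).subset ha)
      have hl₁len : (l.take (c * n + c)).length = c * n + c := by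
        simp only [List.length_take]
        omega
      obtain ⟨v, hv, hρv⟩ := key T ρ hgrowth hc hn (l.take (c * n + c)) hl₁T hl₁len
      have hprod : ρ l.prod = ρ v * ρ (l.drop (c * n + c)).prod := by
        calc ρ l.prod = ρ ((l.take (c * n + c) ++ l.drop (c * n + c)).prod) := by
              rw [List.take_append_drop]
          _ = ρ v * ρ (l.drop (c * n + c)).prod := by
              rw [List.prod_append, map_mul]
              congr 1
              exact hρv.symm
      rw [hprod]
      clear hprod hρv
      induction hv using Submodule.span_induction with
      | mem z hz =>
        obtain ⟨m, hm1, hm2, rfl⟩ := hz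
        have hre : ρ m.prod * ρ (l.drop (c * n + c)).prod = ρ ((m ++ l.drop (c * n + c)).prod) := by
          rw [List.prod_append, map_mul]
        rw [hre]
        refine ih ((m ++ l.drop (c * n + c)).length) ?_ _ rfl ?_
        · simp only [List.length_append, List.length_drop]
          omega
        · intro a ha
          rcases List.mem_append.1 ha with h | h
          exacts [hm2 a h, hl₂T a h]
      | zero => rw [map_zero, zero_mul]; exact Submodule.zero_mem _
      | add a b _ _ ha hb => rw [map_add, add_mul]; exact Submodule.add_mem _ ha hb
      | smul a z _ hz => rw [map_smul, smul_mul_assoc]; exact Submodule.smul_mem _ _ hz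

theorem image_le (T : Finset R) (hT : Algebra.adjoin k (T : Set R) = ⊤)
    {c n : ℕ} (ρ : R →ₐ[k] Matrix (Fin n) (Fin n) k)
    (hgrowth : ∀ i : ℕ, Module.finrank k (wordSpan k (T : Set R) (i + 1)) ≤
      Module.finrank k (wordSpan k (T : Set R) i) + c)
    (hc : 1 ≤ c) (hn : 1 ≤ n) :
    ∀ r : R, ρ r ∈ (wordSpan k (T : Set R) (c * n + c - 1)).map ρ.toLinearMap := by
  intro r
  have hr : ∃ i, r ∈ wordSpan k (T : Set R) i := by
    have hmem : r ∈ (⊤ : Subalgebra k R) := trivial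
    rw [← hT] at hmem
    induction hmem using Algebra.adjoin_induction with
    | mem x hx =>
      refine ⟨1, ?_⟩
      have := mem_wordSpan (k := k) (S := (T : Set R)) (l := [x]) (i := 1)
        (by simpa using hx) (by simp)
      simpa using this
    | algebraMap r =>
      refine ⟨0, ?_⟩
      rw [Algebra.algebraMap_eq_smul_one]
      exact Submodule.smul_mem _ _ one_mem_wordSpan
    | add x y _ _ ihx ihy =>
      obtain ⟨i, hi⟩ := ihx
      obtain ⟨j, hj⟩ := ihy
      exact ⟨max i j, Submodule.add_mem _ (wordSpan_mono (le_max_left i j) hi)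
        (wordSpan_mono (le_max_right i j) hj)⟩
    | mul x y _ _ ihx ihy =>
      obtain ⟨i, hi⟩ := ihx
      obtain ⟨j, hj⟩ := ihy
      exact ⟨i + j, mul_mem_wordSpan hi hj⟩
  obtain ⟨i, hi⟩ := hr
  induction hi using Submodule.span_induction with
  | mem z hz =>
    obtain ⟨m, _, hm2, rfl⟩ := hz
    exact all_words T ρ hgrowth hc hn m.length m rfl hm2
  | zero => rw [map_zero]; exact Submodule.zero_mem _
  | add x y _ _ hx hy => rw [map_add]; exact Submodule.add_mem _ hx hy
  | smul a z _ hz => rw [map_smul]; exact Submodule.smul_mem _ _ hz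

end SSW

namespace SSW

open Module Submodule

variable {k R : Type*} [Field k] [Ring R] [Algebra k R]

theorem dim_lower {n : ℕ} (ρ : R →ₐ[k] Matrix (Fin n) (Fin n) k)
    (hirr : Algebra.adjoin (AlgebraicClosure k)
        ((fun M : Matrix (Fin n) (Fin n) k =>
          M.map (algebraMap k (AlgebraicClosure k))) '' Set.range ρ) = ⊤)
    (S : Submodule k (Matrix (Fin n) (Fin n) k)) (hS : ∀ r : R, ρ r ∈ S) :
    n * n ≤ finrank k S := by
  classical
  set K := AlgebraicClosure k with hK
  set φ : Matrix (Fin n) (Fin n) k →+* Matrix (Fin n) (Fin n) K :=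
    (algebraMap k K).mapMatrix with hφ
  have hφapp : ∀ M : Matrix (Fin n) (Fin n) k, φ M = M.map (algebraMap k K) := fun M => rfl
  have hφsmul : ∀ (a : k) (M : Matrix (Fin n) (Fin n) k),
      φ (a • M) = algebraMap k K a • φ M := by
    intro a M
    ext i j
    simp [hφ, Matrix.map_apply, smul_eq_mul, map_mul]
  set P : Submodule k (Matrix (Fin n) (Fin n) k) := Submodule.span k (Set.range ρ) with hP
  have hPle : P ≤ S := Submodule.span_le.2 (by rintro _ ⟨r, rfl⟩; exact hS r)
  set D := finrank k P with hD
  set b := Module.finBasis k P with hb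
  set Bf : Finset (Matrix (Fin n) (Fin n) K) :=
    Finset.image (fun i : Fin D => φ ((b i : P) : Matrix (Fin n) (Fin n) k)) Finset.univ with hBf
  set B : Set (Matrix (Fin n) (Fin n) K) := ↑Bf with hB
  have hPspan : Submodule.span k
      (Set.range (fun i : Fin D => ((b i : P) : Matrix (Fin n) (Fin n) k))) = P := by
    have h1 := Basis.span_eq b
    have h2 := congrArg (Submodule.map P.subtype) h1
    rw [Submodule.map_span, Submodule.map_top, Submodule.range_subtype, ← Set.range_comp] at h2
    exact h2
  have hinB : ∀ x ∈ P, φ x ∈ Submodule.span K B := by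
    intro x hx
    rw [← hPspan] at hx
    induction hx using Submodule.span_induction with
    | mem z hz =>
      obtain ⟨i, rfl⟩ := hz
      exact Submodule.subset_span
        (Finset.mem_coe.2 (Finset.mem_image_of_mem _ (Finset.mem_univ i)))
    | zero => rw [map_zero]; exact Submodule.zero_mem _
    | add a c _ _ ha hc => rw [map_add]; exact Submodule.add_mem _ ha hc
    | smul a z _ hz => rw [hφsmul]; exact Submodule.smul_mem _ _ hz
  set X : Set (Matrix (Fin n) (Fin n) K) :=
    (fun M : Matrix (Fin n) (Fin n) k => M.map (algebraMap k K)) '' Set.range ρ with hX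
  have hone : (1 : Matrix (Fin n) (Fin n) K) ∈ Submodule.span K X := by
    apply Submodule.subset_span
    refine ⟨ρ 1, ⟨1, rfl⟩, ?_⟩
    show φ (ρ 1) = 1
    rw [map_one ρ, map_one φ]
  have hmul : ∀ x y : Matrix (Fin n) (Fin n) K, x ∈ Submodule.span K X →
      y ∈ Submodule.span K X → x * y ∈ Submodule.span K X := by
    intro x y hx hy
    have hxy := Submodule.mul_mem_mul hx hy
    rw [Submodule.span_mul_span] at hxy
    refine Submodule.span_le.2 ?_ hxy
    rintro _ ⟨x', hx', y', hy', rfl⟩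
    obtain ⟨_, ⟨r, rfl⟩, rfl⟩ := hx'
    obtain ⟨_, ⟨r', rfl⟩, rfl⟩ := hy'
    apply Submodule.subset_span
    refine ⟨ρ (r * r'), ⟨r * r', rfl⟩, ?_⟩
    show φ (ρ (r * r')) = φ (ρ r) * φ (ρ r')
    rw [map_mul ρ, map_mul φ]
  have hadj := Algebra.adjoin_le (R := K) (A := Matrix (Fin n) (Fin n) K)
    (S := (Submodule.span K X).toSubalgebra hone hmul) Submodule.subset_span
  rw [hirr] at hadj
  have htop : ∀ z : Matrix (Fin n) (Fin n) K, z ∈ Submodule.span K X :=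
    fun z => hadj (show z ∈ (⊤ : Subalgebra K _) from trivial)
  have hXB : X ⊆ (Submodule.span K B : Set (Matrix (Fin n) (Fin n) K)) := by
    rintro _ ⟨_, ⟨r, rfl⟩, rfl⟩
    exact hinB (ρ r) (Submodule.subset_span ⟨r, rfl⟩)
  have hspanB : Submodule.span K B = ⊤ := by
    rw [eq_top_iff]
    exact fun z _ => Submodule.span_le.2 hXB (htop z)
  have hcard : finrank K (Submodule.span K B) ≤ D := by
    have h1 : Set.finrank K B ≤ Bf.card := finrank_span_finset_le_card (R := K) Bf
    have h2 : Bf.card ≤ D := by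
      calc Bf.card ≤ (Finset.univ : Finset (Fin D)).card := Finset.card_image_le
        _ = D := by simp
    exact le_trans h1 h2
  rw [hspanB, finrank_top] at hcard
  have hmat : finrank K (Matrix (Fin n) (Fin n) K) = n * n := by
    rw [Module.finrank_matrix]
    simp
  rw [hmat] at hcard
  calc n * n ≤ D := hcard
    _ ≤ finrank k S := Submodule.finrank_mono hPle

end SSW

theorem stmt_6 {k R : Type*} [Field k] [Ring R] [Algebra k R]
    (T : Finset R) (hT : Algebra.adjoin k (T : Set R) = ⊤)
    (c : ℕ) (hc : 1 ≤ c)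
    (hgrowth : ∀ i : ℕ, Module.finrank k (wordSpan k (T : Set R) (i + 1)) ≤
      Module.finrank k (wordSpan k (T : Set R) i) + c)
    (hinf : ¬ FiniteDimensional k R)
    (n : ℕ) (ρ : R →ₐ[k] Matrix (Fin n) (Fin n) k)
    (hirr : Algebra.adjoin (AlgebraicClosure k)
        ((fun M : Matrix (Fin n) (Fin n) k =>
          M.map (algebraMap k (AlgebraicClosure k))) '' Set.range ρ) = ⊤) :
    (n : ℝ) ≤ ((c : ℝ) ^ 2 + Real.sqrt ((c : ℝ) ^ 4 + 4 * (c : ℝ) ^ 2 - 4 * (c : ℝ) + 4)) / 2 := by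
  classical
  have hsq : (0:ℝ) ≤ (c : ℝ) ^ 4 + 4 * (c : ℝ) ^ 2 - 4 * (c : ℝ) + 4 := by
    nlinarith [sq_nonneg ((c:ℝ)^2), sq_nonneg (2*(c:ℝ) - 1)]
  have hs0 := Real.sqrt_nonneg ((c : ℝ) ^ 4 + 4 * (c : ℝ) ^ 2 - 4 * (c : ℝ) + 4)
  rcases Nat.eq_zero_or_pos n with hn0 | hn1
  · rw [hn0]
    push_cast
    apply div_nonneg _ (by norm_num)
    exact add_nonneg (by positivity) hs0
  · have hn : 1 ≤ n := hn1
    set M := c * n + c - 1 with hM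
    haveI := SSW.wordSpan_fd (k := k) T M
    have himg := SSW.image_le T hT ρ hgrowth hc hn
    have h1 : n * n ≤ Module.finrank k ((wordSpan k (T : Set R) M).map ρ.toLinearMap) :=
      SSW.dim_lower ρ hirr _ himg
    have h2 : Module.finrank k ((wordSpan k (T : Set R) M).map ρ.toLinearMap) ≤
        Module.finrank k (wordSpan k (T : Set R) M) :=
      Submodule.finrank_map_le _ _
    have h3 := SSW.wordSpan_finrank T c hgrowth M
    have hnat : n * n ≤ 1 + c * M := le_trans h1 (le_trans h2 h3)
    have hMc : M + 1 = c * n + c := by omega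
    have hcast : ((M : ℕ) : ℝ) = (c : ℝ) * n + c - 1 := by
      have h5 : ((M : ℕ) : ℝ) + 1 = (c : ℝ) * n + c := by exact_mod_cast hMc
      linarith
    have hreal : (n : ℝ) * n ≤ 1 + (c : ℝ) * ((c : ℝ) * n + (c : ℝ) - 1) := by
      have h4 : ((n * n : ℕ) : ℝ) ≤ ((1 + c * M : ℕ) : ℝ) := Nat.cast_le.2 hnat
      push_cast at h4
      rw [hcast] at h4
      linarith
    set s := Real.sqrt ((c : ℝ) ^ 4 + 4 * (c : ℝ) ^ 2 - 4 * (c : ℝ) + 4) with hsdef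
    have hs2 : s ^ 2 = (c : ℝ) ^ 4 + 4 * (c : ℝ) ^ 2 - 4 * (c : ℝ) + 4 := Real.sq_sqrt hsq
    have hc1 : (1 : ℝ) ≤ (c : ℝ) := by exact_mod_cast hc
    nlinarith [hs0, hs2, hreal, sq_nonneg ((2:ℝ) * n - (c:ℝ)^2 - s),
      sq_nonneg ((2:ℝ) * n - (c:ℝ)^2 + s)]
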